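/- If a finite simple graph G contains a 3-wheel as an induced subgraph, then G is not locally {P₃}-decomposable: there exist a vertex v, an induced path x–y–z in N(v), and a connected component C of G − N[v] such that both x and z have a neighbor in C. -/

import Mathlib

open SimpleGraph

/-- `G` contains a 3-wheel: there is a hole (an induced cycle of length at least 4,
given by a graph embedding of `cycleGraph n` into `G`) and a vertex `v` off the hole
adjacent to three consecutive vertices of the hole. -/
def ContainsThreeWheel {V : Type*} (G : SimpleGraph V) : Prop :=
  ∃ (n : ℕ), 4 ≤ n ∧ ∃ (e : SimpleGraph.cycleGraph n ↪g G) (v : V),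
    (∀ i : Fin n, v ≠ e i) ∧
    ∃ i j k : Fin n, (SimpleGraph.cycleGraph n).Adj i j ∧
      (SimpleGraph.cycleGraph n).Adj j k ∧ i ≠ k ∧
      G.Adj v (e i) ∧ G.Adj v (e j) ∧ G.Adj v (e k)

/-- if `G` contains a 3-wheel, then `G` is not locally
`{P₃}`-decomposable: there exist a vertex `v`, an induced path `x–y–z` in `N(v)`, and
a connected component `C` of `G − N[v]` such that both `x` and `z` have a neighbor
in `C`. -/

private lemma mod_helper (n a r : ℕ) (h : a = r ∨ a = n + r) (hr : r < n) : a % n = r := by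
  rcases h with h | h
  · subst h; exact Nat.mod_eq_of_lt hr
  · subst h; rw [Nat.add_mod_left]; exact Nat.mod_eq_of_lt hr

private lemma val_sub (m : ℕ) (a b : Fin (m+4)) :
    (a - b).val = ((m+4) - b.val + a.val) % (m+4) := by
  rw [Fin.sub_def]

private lemma wheel_core {V : Type*} (G : SimpleGraph V) (m : ℕ)
    (e : cycleGraph (m+4) ↪g G) (u : V) (j : Fin (m+4))
    (hui : G.Adj u (e (j + ⟨1, by omega⟩)))
    (huj : G.Adj u (e j))
    (huk : G.Adj u (e (j + ⟨m+3, by omega⟩))) :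
    ∃ v x y z : V, G.Adj v x ∧ G.Adj v y ∧ G.Adj v z ∧
      G.Adj x y ∧ G.Adj y z ∧ x ≠ z ∧ ¬ G.Adj x z ∧
      ∃ C : (G.induce {w : V | ¬ (w = v ∨ G.Adj v w)}).ConnectedComponent,
        (∃ w : {w : V | ¬ (w = v ∨ G.Adj v w)},
          (G.induce {w : V | ¬ (w = v ∨ G.Adj v w)}).connectedComponentMk w = C ∧
          G.Adj x ↑w) ∧
        (∃ w : {w : V | ¬ (w = v ∨ G.Adj v w)},
          (G.induce {w : V | ¬ (w = v ∨ G.Adj v w)}).connectedComponentMk w = C ∧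
          G.Adj z ↑w) := by
  have hn : True := trivial
  -- generic adjacency between consecutive "offsets"
  have hadj : ∀ (s t : ℕ) (hs : s < m+4) (ht : t < m+4), t = s + 1 →
      (cycleGraph (m+4)).Adj (j + ⟨s, hs⟩) (j + ⟨t, ht⟩) := by
    intro s t hs ht hst
    rw [cycleGraph_adj']
    right
    rw [add_sub_add_left_eq_sub, val_sub]
    simp only
    apply mod_helper
    · omega
    · omega
  -- adjacency of j with offset t iff t = 1 or t = m+3
  have hnadj : ∀ (t : ℕ) (ht : t < m+4), 2 ≤ t → t ≤ m + 2 →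
      ¬ (cycleGraph (m+4)).Adj j (j + ⟨t, ht⟩) := by
    intro t ht h2 h3
    rw [cycleGraph_adj']
    push_neg
    constructor
    · rw [sub_add_cancel_left, ← zero_sub, val_sub]
      simp only [Fin.val_zero]
      rw [mod_helper (m+4) _ (m+4 - t) (by omega) (by omega)]
      omega
    · rw [add_sub_cancel_left]
      simp only
      omega
  -- offsets are distinct from j
  have hne : ∀ (t : ℕ) (ht : t < m+4), 1 ≤ t → j + ⟨t, ht⟩ ≠ j := by
    intro t ht h1 h
    have : (⟨t, ht⟩ : Fin (m+4)) = 0 := by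
      have := add_right_inj (a := j) (b := (⟨t, ht⟩ : Fin (m+4))) (c := 0)
      rw [add_zero] at this
      exact this.mp h
    have := congrArg Fin.val this
    simp at this
    omega
  set v := e j with hv
  set S := {w : V | ¬ (w = v ∨ G.Adj v w)} with hS
  -- membership of offsets 2 .. m+2 in S
  have hmem : ∀ (t : ℕ) (ht : t < m+4), 2 ≤ t → t ≤ m + 2 → e (j + ⟨t, ht⟩) ∈ S := by
    intro t ht h2 h3
    rintro (h | h)
    · exact hne t ht (by omega) (e.injective h)
    · exact hnadj t ht h2 h3 (e.map_rel_iff.mp h)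
  -- reachability of offsets 2 .. m+2 from offset 2 inside induced graph
  have hreach : ∀ (t : ℕ), 2 ≤ t → ∀ (h3 : t ≤ m + 2) (ht : t < m+4)
      (hm : e (j + ⟨t, ht⟩) ∈ S),
      (G.induce S).Reachable ⟨e (j + ⟨2, by omega⟩), hmem 2 (by omega) (by omega) (by omega)⟩
        ⟨e (j + ⟨t, ht⟩), hm⟩ := by
    intro t h2
    induction t, h2 using Nat.le_induction with
    | base => intro _ _ _; exact Reachable.refl _
    | succ t h2 ih =>
      intro h3 ht hm
      have ht' : t < m+4 := by omega
      have hm' : e (j + ⟨t, ht'⟩) ∈ S := hmem t ht' (by omega) (by omega)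
      refine (ih (by omega) ht' hm').trans (Adj.reachable ?_)
      show G.Adj (e (j + ⟨t, ht'⟩)) (e (j + ⟨t+1, ht⟩))
      exact e.map_rel_iff.mpr (hadj t (t+1) ht' ht rfl)
  refine ⟨v, e (j + ⟨1, by omega⟩), u, e (j + ⟨m+3, by omega⟩), ?_, huj.symm, ?_, hui.symm, huk,
      ?_, ?_, ?_⟩
  · -- v adj x
    exact e.map_rel_iff.mpr (by
      rw [cycleGraph_adj']
      right
      rw [add_sub_cancel_left])
  · -- v adj z
    exact e.map_rel_iff.mpr (by
      rw [cycleGraph_adj']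
      left
      rw [sub_add_cancel_left, ← zero_sub, val_sub]
      simp only [Fin.val_zero]
      apply mod_helper <;> omega)
  · -- x ≠ z
    intro h
    have := e.injective h
    rw [add_right_inj] at this
    have := congrArg Fin.val this
    simp at this
  · -- ¬ x adj z
    intro h
    have := e.map_rel_iff.mp h
    rw [cycleGraph_adj'] at this
    rcases this with h' | h' <;> rw [add_sub_add_left_eq_sub, val_sub] at h' <;>
      simp only at h'
    · rw [mod_helper (m+4) _ 2 (by omega) (by omega)] at h'
      omega
    · rw [mod_helper (m+4) _ (m+2) (by omega) (by omega)] at h'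
      omega
  · -- the component
    refine ⟨(G.induce S).connectedComponentMk
        ⟨e (j + ⟨2, by omega⟩), hmem 2 (by omega) (by omega) (by omega)⟩,
      ⟨⟨e (j + ⟨2, by omega⟩), hmem 2 (by omega) (by omega) (by omega)⟩, rfl, ?_⟩,
      ⟨⟨e (j + ⟨m+2, by omega⟩), hmem (m+2) (by omega) (by omega) (by omega)⟩,
        (ConnectedComponent.sound
          (hreach (m+2) (by omega) (by omega) (by omega) _).symm), ?_⟩⟩
    · exact e.map_rel_iff.mpr (hadj 1 2 (by omega) (by omega) rfl)
    · exact (e.map_rel_iff.mpr (hadj (m+2) (m+3) (by omega) (by omega) rfl)).symm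

theorem stmt_8 {V : Type*} [Fintype V] (G : SimpleGraph V)
    (h : ContainsThreeWheel G) :
    ∃ v x y z : V, G.Adj v x ∧ G.Adj v y ∧ G.Adj v z ∧
      G.Adj x y ∧ G.Adj y z ∧ x ≠ z ∧ ¬ G.Adj x z ∧
      ∃ C : (G.induce {w : V | ¬ (w = v ∨ G.Adj v w)}).ConnectedComponent,
        (∃ w : {w : V | ¬ (w = v ∨ G.Adj v w)},
          (G.induce {w : V | ¬ (w = v ∨ G.Adj v w)}).connectedComponentMk w = C ∧
          G.Adj x ↑w) ∧
        (∃ w : {w : V | ¬ (w = v ∨ G.Adj v w)},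
          (G.induce {w : V | ¬ (w = v ∨ G.Adj v w)}).connectedComponentMk w = C ∧
          G.Adj z ↑w) := by
  obtain ⟨n, hn4, e, u, -, i, j, k, hij, hjk, hik, hui, huj, huk⟩ := h
  obtain ⟨m, rfl⟩ : ∃ m, n = m + 4 := ⟨n - 4, by omega⟩
  have hone : (1 : Fin (m+4)) = ⟨1, by omega⟩ := rfl
  have hmone : (⟨m+3, by omega⟩ : Fin (m+4)) = -1 := by
    apply eq_neg_of_add_eq_zero_left
    apply Fin.ext
    rw [Fin.add_def]
    simp [Fin.val_one]
  -- characterize neighbors of j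
  have hchar : ∀ a : Fin (m+4), (cycleGraph (m+4)).Adj j a →
      a = j + ⟨1, by omega⟩ ∨ a = j + ⟨m+3, by omega⟩ := by
    intro a ha
    rw [show ((m : ℕ) + 4) = (m + 2) + 2 from rfl] at *
    rw [cycleGraph_adj] at ha
    rcases ha with ha | ha
    · right
      rw [hmone]
      rw [sub_eq_iff_eq_add] at ha
      rw [ha]
      abel
    · left
      rw [← hone]
      rw [sub_eq_iff_eq_add] at ha
      rw [ha]
      abel
  rcases hchar i hij.symm with hi | hi <;> rcases hchar k hjk with hk | hk
  · exact absurd (hi.trans hk.symm) hik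
  · subst hi; subst hk
    exact wheel_core G m e u j hui huj huk
  · subst hi; subst hk
    exact wheel_core G m e u j huk huj hui
  · exact absurd (hi.trans hk.symm) hik
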